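/- Let W be a real m×m matrix and A a real n×n matrix such that the spectral radius of |Aᵀ ⊗ W| is strictly less than 1. Then for every componentwise non-expansive φ : ℝ → ℝ and every real m×n matrix B, the matrix equation X = φ(W X A + B), with φ applied entrywise, has exactly one solution X ∈ ℝ^{m×n}. -/

import Mathlib

open Matrix Kronecker

/-- The spectral radius of a real square matrix: the supremum of the moduli of its
complex eigenvalues (elements of the spectrum of the matrix viewed over `ℂ`). -/
noncomputable def specRad {ι : Type*} [Fintype ι] [DecidableEq ι]
    (M : Matrix ι ι ℝ) : ENNReal :=
  spectralRadius ℂ (M.map Complex.ofReal)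

attribute [local instance] Matrix.linftyOpNormedAddCommGroup Matrix.linftyOpNormedRing
  Matrix.linftyOpNormedAlgebra Matrix.linftyOpNormedSpace

private instance auxCompleteMat {ι : Type*} [Fintype ι] [DecidableEq ι] :
    CompleteSpace (Matrix ι ι ℂ) :=
  FiniteDimensional.complete ℂ _

/-- The `L∞` operator norm of a real matrix agrees with that of its complexification. -/
private lemma aux_nnnorm_map {ι κ : Type*} [Fintype ι] [Fintype κ]
    (M : Matrix ι κ ℝ) : ‖M.map Complex.ofReal‖₊ = ‖M‖₊ := by
  simp only [Matrix.linfty_opNNNorm_def, Matrix.map_apply, Complex.nnnorm_real]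

/-- If the spectral radius is `< 1`, some power of the matrix has `L∞` operator norm `< 1`. -/
private lemma aux_exists_pow_norm_lt {ι : Type*} [Fintype ι] [DecidableEq ι]
    (M : Matrix ι ι ℝ) (h : specRad M < 1) : ∃ k : ℕ, 0 < k ∧ ‖M ^ k‖₊ < 1 := by
  have hg := spectrum.pow_nnnorm_pow_one_div_tendsto_nhds_spectralRadius
    (M.map Complex.ofReal)
  have h' : spectralRadius ℂ (M.map Complex.ofReal) < 1 := h
  have hev := (hg.eventually_lt_const h').and (Filter.eventually_gt_atTop 0)
  obtain ⟨k, hk1, hk0⟩ := hev.exists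
  refine ⟨k, hk0, ?_⟩
  have hmap : (M.map Complex.ofReal) ^ k = (M ^ k).map Complex.ofReal := by
    have := map_pow (RingHom.mapMatrix (m := ι) Complex.ofRealHom) M k
    have h2 := this.symm
    simp only [RingHom.mapMatrix_apply] at h2
    exact h2
  have hx : ((‖M ^ k‖₊ : ENNReal)) ^ ((1 : ℝ) / k) < 1 := by
    rw [← aux_nnnorm_map (M ^ k), ← hmap]
    exact hk1
  by_contra hcon
  push_neg at hcon
  have h1 : (1 : ENNReal) ≤ (‖M ^ k‖₊ : ENNReal) := by exact_mod_cast hcon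
  have : (1 : ENNReal) ≤ ((‖M ^ k‖₊ : ENNReal)) ^ ((1 : ℝ) / k) := by
    exact ENNReal.one_le_rpow h1 (one_div_pos.mpr (by exact_mod_cast hk0))
  exact absurd hx (not_lt.mpr this)

/-- Monotonicity of multiplication by an entrywise nonnegative matrix. -/
private lemma aux_mulVec_mono {ι κ : Type*} [Fintype ι] [Fintype κ]
    (M : Matrix ι κ ℝ) (hM : ∀ i j, 0 ≤ M i j) {u v : κ → ℝ} (huv : ∀ j, u j ≤ v j) :
    ∀ i, (M *ᵥ u) i ≤ (M *ᵥ v) i := by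
  intro i
  refine Finset.sum_le_sum fun j _ => ?_
  exact mul_le_mul_of_nonneg_left (huv j) (hM i j)

theorem stmt_3 {m n : ℕ} (W : Matrix (Fin m) (Fin m) ℝ) (A : Matrix (Fin n) (Fin n) ℝ)
    (hρ : specRad ((Aᵀ ⊗ₖ W).map fun a => |a|) < 1)
    (φ : ℝ → ℝ) (hφ : ∀ a b : ℝ, |φ a - φ b| ≤ |a - b|)
    (B : Matrix (Fin m) (Fin n) ℝ) :
    ∃! X : Matrix (Fin m) (Fin n) ℝ, X = (W * X * A + B).map φ := by
  classical
  set N : Matrix (Fin n × Fin m) (Fin n × Fin m) ℝ := (Aᵀ ⊗ₖ W).map fun a => |a| with hN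
  have hNpos : ∀ p q, 0 ≤ N p q := fun p q => abs_nonneg _
  obtain ⟨k, hk0, hNk⟩ := aux_exists_pow_norm_lt N hρ
  set T : Matrix (Fin m) (Fin n) ℝ → Matrix (Fin m) (Fin n) ℝ :=
    fun X => (W * X * A + B).map φ with hT
  -- vectorization
  set vec : Matrix (Fin m) (Fin n) ℝ → (Fin n × Fin m → ℝ) := fun X p => X p.2 p.1 with hvec
  set unvec : (Fin n × Fin m → ℝ) → Matrix (Fin m) (Fin n) ℝ :=
    fun v => Matrix.of fun i j => v (j, i) with hunvec
  have hvu : ∀ X, unvec (vec X) = X := fun X => rfl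
  have huv : ∀ v, vec (unvec v) = v := fun v => rfl
  set τ : (Fin n × Fin m → ℝ) → (Fin n × Fin m → ℝ) := fun v => vec (T (unvec v)) with hτ
  have hτvec : ∀ X, τ (vec X) = vec (T X) := fun X => rfl
  -- one-step componentwise estimate
  have key1 : ∀ X Y : Matrix (Fin m) (Fin n) ℝ, ∀ p : Fin n × Fin m,
      |vec (T X) p - vec (T Y) p| ≤ (N *ᵥ fun q => |vec X q - vec Y q|) p := by
    intro X Y p
    obtain ⟨j, i⟩ := p
    have hdiff : (W * X * A + B) i j - (W * Y * A + B) i j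
        = ∑ l, ∑ kk, W i kk * (X kk l - Y kk l) * A l j := by
      simp only [Matrix.add_apply, Matrix.mul_apply, add_sub_add_right_eq_sub]
      rw [← Finset.sum_sub_distrib]
      refine Finset.sum_congr rfl fun l _ => ?_
      rw [← sub_mul, ← Finset.sum_sub_distrib, Finset.sum_mul]
      refine Finset.sum_congr rfl fun kk _ => ?_
      ring
    calc |vec (T X) (j, i) - vec (T Y) (j, i)|
        = |φ ((W * X * A + B) i j) - φ ((W * Y * A + B) i j)| := rfl
      _ ≤ |(W * X * A + B) i j - (W * Y * A + B) i j| := hφ _ _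
      _ = |∑ l, ∑ kk, W i kk * (X kk l - Y kk l) * A l j| := by rw [hdiff]
      _ ≤ ∑ l, ∑ kk, |W i kk * (X kk l - Y kk l) * A l j| := by
          refine (Finset.abs_sum_le_sum_abs _ _).trans ?_
          exact Finset.sum_le_sum fun l _ => Finset.abs_sum_le_sum_abs _ _
      _ = (N *ᵥ fun q => |vec X q - vec Y q|) (j, i) := by
          rw [Matrix.mulVec, dotProduct]
          rw [Fintype.sum_prod_type]
          refine Finset.sum_congr rfl fun l _ => Finset.sum_congr rfl fun kk _ => ?_
          simp only [hN, Matrix.map_apply, Matrix.kroneckerMap_apply, Matrix.transpose_apply,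
            hvec, abs_mul]
          ring
  -- iterated componentwise estimate
  have keyk : ∀ (j : ℕ) (X Y : Matrix (Fin m) (Fin n) ℝ) (p : Fin n × Fin m),
      |vec (T^[j] X) p - vec (T^[j] Y) p| ≤ ((N ^ j) *ᵥ fun q => |vec X q - vec Y q|) p := by
    intro j
    induction j with
    | zero =>
      intro X Y p
      simp [Matrix.one_mulVec]
    | succ j ih =>
      intro X Y p
      rw [Function.iterate_succ_apply', Function.iterate_succ_apply']
      calc |vec (T (T^[j] X)) p - vec (T (T^[j] Y)) p|
          ≤ (N *ᵥ fun q => |vec (T^[j] X) q - vec (T^[j] Y) q|) p := key1 _ _ p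
        _ ≤ (N *ᵥ ((N ^ j) *ᵥ fun q => |vec X q - vec Y q|)) p :=
            aux_mulVec_mono N hNpos (fun q => ih X Y q) p
        _ = ((N ^ (j + 1)) *ᵥ fun q => |vec X q - vec Y q|) p := by
            rw [Matrix.mulVec_mulVec, ← pow_succ']
  -- the k-th iterate of τ is a contraction
  have hnormeq : ∀ u v : Fin n × Fin m → ℝ,
      ‖(fun q => |vec (unvec u) q - vec (unvec v) q|)‖ = ‖u - v‖ := by
    intro u v
    rw [Pi.norm_def, Pi.norm_def]
    congr 1
    refine Finset.sup_congr rfl fun p _ => ?_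
    simp [huv, Real.nnnorm_abs]
  have hlip : LipschitzWith ‖N ^ k‖₊ (τ^[k]) := by
    refine LipschitzWith.of_dist_le_mul fun u v => ?_
    have hiter : ∀ (v : Fin n × Fin m → ℝ), τ^[k] v = vec (T^[k] (unvec v)) := by
      intro v
      have : ∀ j : ℕ, τ^[j] v = vec (T^[j] (unvec v)) := by
        intro j
        induction j with
        | zero => simp [huv]
        | succ j ih =>
          rw [Function.iterate_succ_apply', Function.iterate_succ_apply', ih, hτvec]
      exact this k
    rw [dist_eq_norm, dist_eq_norm, hiter, hiter]
    set w : Fin n × Fin m → ℝ := fun q => |vec (unvec u) q - vec (unvec v) q| with hw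
    have h1 : ‖vec (T^[k] (unvec u)) - vec (T^[k] (unvec v))‖ ≤ ‖(N ^ k) *ᵥ w‖ := by
      apply pi_norm_le_iff_of_nonneg (norm_nonneg _) |>.2
      intro p
      calc ‖(vec (T^[k] (unvec u)) - vec (T^[k] (unvec v))) p‖
          = |vec (T^[k] (unvec u)) p - vec (T^[k] (unvec v)) p| := rfl
        _ ≤ ((N ^ k) *ᵥ w) p := keyk k _ _ p
        _ ≤ |((N ^ k) *ᵥ w) p| := le_abs_self _
        _ ≤ ‖(N ^ k) *ᵥ w‖ := by rw [← Real.norm_eq_abs]; exact norm_le_pi_norm _ p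
    have h2 : ‖(N ^ k) *ᵥ w‖ ≤ ‖N ^ k‖ * ‖w‖ := Matrix.linfty_opNorm_mulVec _ _
    calc ‖vec (T^[k] (unvec u)) - vec (T^[k] (unvec v))‖
        ≤ ‖N ^ k‖ * ‖w‖ := h1.trans h2
      _ = ‖N ^ k‖₊ * ‖u - v‖ := by rw [hw, hnormeq u v]; rfl
  have hc : ContractingWith ‖N ^ k‖₊ (τ^[k]) := ⟨hNk, hlip⟩
  -- fixed point
  set z : Fin n × Fin m → ℝ := hc.fixedPoint (τ^[k]) with hz
  have hzfix : Function.IsFixedPt τ z := hc.isFixedPt_fixedPoint_iterate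
  refine ⟨unvec z, ?_, ?_⟩
  · have : T (unvec z) = unvec z := by
      have h1 : vec (T (unvec z)) = z := hzfix
      calc T (unvec z) = unvec (vec (T (unvec z))) := (hvu _).symm
        _ = unvec z := by rw [h1]
    exact this.symm
  · intro X hX
    have hfix : Function.IsFixedPt τ (vec X) := by
      show τ (vec X) = vec X
      rw [hτvec, hT]
      exact congrArg vec hX.symm
    have : vec X = z := hc.fixedPoint_unique (hfix.iterate k)
    calc X = unvec (vec X) := (hvu X).symm
      _ = unvec z := by rw [this]
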